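/- Let s > 0, let P satisfy H1, and fix x₀ > 0. Suppose there exists a positive solution of the Dyson–Schwinger ODE on [x₀, ∞) with initial value b > 0 at x₀. Then for every a ≥ b there also exists a positive solution on [x₀, ∞) with initial value a at x₀; that is, the set of initial values at x₀ leading to global positive solutions is upward closed. -/

import Mathlib

open Real MeasureTheory Filter Set
open scoped Topology

noncomputable section

/-- `γ` is a positive solution of the Dyson–Schwinger ODE
`γ'(x) = (γ(x) + γ(x)² − P(x)) / (s·x·γ(x))` on the set `I`. -/
def IsDSSolution (s : ℝ) (P γ : ℝ → ℝ) (I : Set ℝ) : Prop :=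
  (∀ x ∈ I, 0 < γ x) ∧
    ∀ x ∈ I, HasDerivWithinAt γ ((γ x + (γ x) ^ 2 - P x) / (s * x * γ x)) I x

/-- Hypothesis H1: `P` is twice continuously differentiable on `[0,∞)`,
`P 0 = 0`, and `P x > 0` for `x > 0`. -/
def H1 (P : ℝ → ℝ) : Prop :=
  ContDiffOn ℝ 2 P (Set.Ici 0) ∧ P 0 = 0 ∧ ∀ x > (0 : ℝ), 0 < P x

/-- Hypothesis H2: `P` is strictly increasing on `[0,∞)`. -/
def H2 (P : ℝ → ℝ) : Prop := StrictMonoOn P (Set.Ici 0)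

/-- The nullcline `γ_c(x) = (√(1 + 4 P x) − 1)/2`. -/
def gammaC (P : ℝ → ℝ) (x : ℝ) : ℝ := (Real.sqrt (1 + 4 * P x) - 1) / 2

namespace DSaux

open Metric

/-- The vector field of the Dyson–Schwinger ODE. -/
def F (s : ℝ) (P : ℝ → ℝ) (t y : ℝ) : ℝ := (y + y ^ 2 - P t) / (s * t * y)

/-- Being a (positive) solution on a compact interval `[x₀, c]`. -/
def SolOn (s : ℝ) (P γ : ℝ → ℝ) (x₀ c : ℝ) : Prop :=
  (∀ x ∈ Icc x₀ c, 0 < γ x) ∧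
    ∀ x ∈ Icc x₀ c, HasDerivWithinAt γ (F s P x (γ x)) (Icc x₀ c) x

variable {s : ℝ} {P : ℝ → ℝ}

lemma hasDerivWithinAt_singleton (f : ℝ → ℝ) (x d : ℝ) :
    HasDerivWithinAt f d {x} x := by
  simp only [HasDerivWithinAt, HasDerivAtFilter, nhdsWithin_singleton,
    hasFDerivAtFilter_iff_isLittleO, Asymptotics.isLittleO_pure, sub_self]
  simp

lemma SolOn.continuousOn {γ : ℝ → ℝ} {x₀ c : ℝ} (h : SolOn s P γ x₀ c) :
    ContinuousOn γ (Icc x₀ c) :=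
  fun x hx => (h.2 x hx).continuousWithinAt

lemma SolOn.mono {γ : ℝ → ℝ} {x₀ c c' : ℝ} (h : SolOn s P γ x₀ c) (hc' : c' ≤ c) :
    SolOn s P γ x₀ c' :=
  ⟨fun x hx => h.1 x ⟨hx.1, hx.2.trans hc'⟩,
   fun x hx => (h.2 x ⟨hx.1, hx.2.trans hc'⟩).mono (Icc_subset_Icc_right hc')⟩

lemma deriv_Ici_of_Icc {γ : ℝ → ℝ} {x₀ c d t : ℝ} (h : HasDerivWithinAt γ d (Icc x₀ c) t)
    (ht : t ∈ Ico x₀ c) : HasDerivWithinAt γ d (Ici t) t := by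
  refine h.mono_of_mem_nhdsWithin (mem_nhdsWithin.mpr ⟨Iio c, isOpen_Iio, ht.2, ?_⟩)
  rintro y ⟨hy1, hy2⟩
  exact ⟨le_trans ht.1 hy2, le_of_lt hy1⟩

lemma deriv_Iic_of_Icc {γ : ℝ → ℝ} {x₀ c d t : ℝ} (h : HasDerivWithinAt γ d (Icc x₀ c) t)
    (ht1 : x₀ < t) (ht2 : t ≤ c) : HasDerivWithinAt γ d (Iic t) t := by
  refine h.mono_of_mem_nhdsWithin (mem_nhdsWithin.mpr ⟨Ioi x₀, isOpen_Ioi, ht1, ?_⟩)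
  rintro y ⟨hy1, hy2⟩
  exact ⟨le_of_lt hy1, le_trans hy2 ht2⟩

lemma F_sub (hs : s ≠ 0) {t y₁ y₂ : ℝ} (ht : t ≠ 0) (h1 : y₁ ≠ 0) (h2 : y₂ ≠ 0) :
    F s P t y₁ - F s P t y₂ = (y₁ - y₂) * ((1 + P t / (y₁ * y₂)) / (s * t)) := by
  unfold F
  field_simp
  ring

lemma F_lipschitz {x₀ T ε Pm : ℝ} (hs : 0 < s) (hx₀ : 0 < x₀) (hε : 0 < ε)
    (hPb : ∀ u ∈ Icc x₀ T, 0 ≤ P u ∧ P u ≤ Pm) {t : ℝ} (ht : t ∈ Icc x₀ T) :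
    LipschitzOnWith (Real.toNNReal ((1 + Pm / ε ^ 2) / (s * x₀))) (F s P t) (Ici ε) := by
  have hPt := hPb t ht
  have hPm : 0 ≤ Pm := le_trans hPt.1 hPt.2
  have ht0 : 0 < t := lt_of_lt_of_le hx₀ ht.1
  have hsx₀ : 0 < s * x₀ := mul_pos hs hx₀
  have hst : 0 < s * t := mul_pos hs ht0
  have hKnn : 0 ≤ (1 + Pm / ε ^ 2) / (s * x₀) := by positivity
  apply LipschitzOnWith.of_dist_le_mul
  intro y₁ h1 y₂ h2
  have hy₁ : 0 < y₁ := lt_of_lt_of_le hε h1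
  have hy₂ : 0 < y₂ := lt_of_lt_of_le hε h2
  rw [Real.dist_eq, Real.dist_eq, Real.coe_toNNReal _ hKnn,
    F_sub hs.ne' ht0.ne' hy₁.ne' hy₂.ne', abs_mul, mul_comm ((1 + Pm / ε ^ 2) / (s * x₀))]
  apply mul_le_mul_of_nonneg_left _ (abs_nonneg _)
  have h1' : 0 ≤ 1 + P t / (y₁ * y₂) :=
    add_nonneg zero_le_one (div_nonneg hPt.1 (mul_pos hy₁ hy₂).le)
  rw [abs_of_nonneg (div_nonneg h1' hst.le)]
  apply div_le_div₀ (by positivity) _ hsx₀ (mul_le_mul_of_nonneg_left ht.1 hs.le)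
  have hε2 : ε ^ 2 ≤ y₁ * y₂ := by nlinarith [mem_Ici.mp h1, mem_Ici.mp h2]
  exact add_le_add_right (div_le_div₀ hPm hPt.2 (by positivity) hε2) 1

lemma F_norm_bound {x₀ T m' Pm t y : ℝ} (hs : 0 < s) (hx₀ : 0 < x₀) (hm' : 0 < m')
    (hPb : ∀ u ∈ Icc x₀ T, 0 ≤ P u ∧ P u ≤ Pm) (ht : t ∈ Icc x₀ T) (hy : m' ≤ y) :
    |F s P t y| ≤ (1 / (s * x₀)) * y + (1 / (s * x₀)) * (1 + Pm / m') := by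
  have hPt := hPb t ht
  have hPm : 0 ≤ Pm := le_trans hPt.1 hPt.2
  have ht0 : 0 < t := lt_of_lt_of_le hx₀ ht.1
  have hy0 : 0 < y := lt_of_lt_of_le hm' hy
  have hden : 0 < s * t * y := by positivity
  rw [F, abs_div, abs_of_pos hden, div_le_iff₀ hden]
  have hnum : |y + y ^ 2 - P t| ≤ y + y ^ 2 + P t := by
    rw [abs_le]; constructor <;> nlinarith [hPt.1]
  refine le_trans hnum ?_
  have expand : (1 / (s * x₀) * y + 1 / (s * x₀) * (1 + Pm / m')) * (s * t * y)
      = (y + 1 + Pm / m') * (t * y) / x₀ := by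
    field_simp; ring
  rw [expand, le_div_iff₀ hx₀]
  have h5 : Pm ≤ y * (Pm / m') := by
    rw [mul_div_assoc', le_div_iff₀ hm']
    calc Pm * m' = m' * Pm := by ring
    _ ≤ y * Pm := mul_le_mul_of_nonneg_right hy hPm
  set c := Pm / m' with hc
  have hc0 : 0 ≤ c := div_nonneg hPm hm'.le
  have h7 : (y + 1 + c) * y * x₀ ≤ (y + 1 + c) * y * t :=
    mul_le_mul_of_nonneg_left ht.1 (by positivity)
  nlinarith [mul_le_mul_of_nonneg_right h5 hx₀.le,
    mul_le_mul_of_nonneg_right hPt.2 hx₀.le]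

lemma F_contOn_t {x₀ T y : ℝ} (hPc : ContinuousOn P (Icc x₀ T)) (hx₀ : 0 < x₀)
    (hs : s ≠ 0) (hy : y ≠ 0) :
    ContinuousOn (fun t => F s P t y) (Icc x₀ T) := by
  apply ContinuousOn.div (continuousOn_const.sub hPc)
    ((continuous_const.mul continuous_id).mul continuous_const).continuousOn
  intro t ht
  have ht0 : 0 < t := lt_of_lt_of_le hx₀ ht.1
  exact mul_ne_zero (mul_ne_zero hs ht0.ne') hy

lemma gronwallBound_mono {δ K ε : ℝ} (hδ : 0 ≤ δ) (hK : 0 < K) (hε : 0 ≤ ε) :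
    Monotone (gronwallBound δ K ε) := by
  intro x y hxy
  simp only [gronwallBound_of_K_ne_0 hK.ne']
  have h1 : exp (K * x) ≤ exp (K * y) := exp_le_exp.2 (mul_le_mul_of_nonneg_left hxy hK.le)
  have h2 : 0 ≤ ε / K := div_nonneg hε hK.le
  nlinarith [mul_le_mul_of_nonneg_left h1 hδ, mul_le_mul_of_nonneg_left h1 h2]

/-- Uniqueness of positive solutions on a compact interval, forward in time. -/
lemma sol_unique (hs : 0 < s) {x₀ : ℝ} (hx₀ : 0 < x₀) (hP : H1 P) {c : ℝ} (hc : x₀ ≤ c)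
    {f g : ℝ → ℝ} (hf : SolOn s P f x₀ c) (hg : SolOn s P g x₀ c) (h0 : f x₀ = g x₀) :
    EqOn f g (Icc x₀ c) := by
  have hne : (Icc x₀ c).Nonempty := nonempty_Icc.mpr hc
  obtain ⟨zf, hzf, hminf⟩ := isCompact_Icc.exists_isMinOn hne hf.continuousOn
  obtain ⟨zg, hzg, hming⟩ := isCompact_Icc.exists_isMinOn hne hg.continuousOn
  set ε := min (f zf) (g zg) with hεdef
  have hε0 : 0 < ε := lt_min (hf.1 zf hzf) (hg.1 zg hzg)
  have hPc : ContinuousOn P (Icc x₀ c) :=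
    hP.1.continuousOn.mono (fun u hu => le_trans hx₀.le hu.1)
  obtain ⟨zP, hzP, hmaxP⟩ := isCompact_Icc.exists_isMaxOn hne hPc
  set Pm := P zP with hPmdef
  have hPb : ∀ u ∈ Icc x₀ c, 0 ≤ P u ∧ P u ≤ Pm := fun u hu =>
    ⟨(hP.2.2 u (lt_of_lt_of_le hx₀ hu.1)).le, hmaxP hu⟩
  have hv : ∀ t, LipschitzOnWith (Real.toNNReal ((1 + Pm / ε ^ 2) / (s * x₀))) (F s P t)
      (if t ∈ Icc x₀ c then Ici ε else (∅ : Set ℝ)) := by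
    intro t
    by_cases h : t ∈ Icc x₀ c
    · rw [if_pos h]
      exact F_lipschitz hs hx₀ hε0 hPb h
    · rw [if_neg h]
      exact lipschitzOnWith_empty _ _
  exact ODE_solution_unique_of_mem_Icc_right (fun t _ => hv t) hf.continuousOn
    (fun t ht => deriv_Ici_of_Icc (hf.2 t (Ico_subset_Icc_self ht)) ht)
    (fun t ht => by
      rw [if_pos (Ico_subset_Icc_self ht)]
      have h1 : f zf ≤ f t := hminf (Ico_subset_Icc_self ht)
      exact mem_Ici.mpr (le_trans (min_le_left _ _) h1))
    hg.continuousOn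
    (fun t ht => deriv_Ici_of_Icc (hg.2 t (Ico_subset_Icc_self ht)) ht)
    (fun t ht => by
      rw [if_pos (Ico_subset_Icc_self ht)]
      have h1 : g zg ≤ g t := hming (Ico_subset_Icc_self ht)
      exact mem_Ici.mpr (le_trans (min_le_right _ _) h1))
    h0

/-- Comparison: a positive solution starting strictly above `γb x₀` stays above `γb`. -/
lemma compare (hs : 0 < s) {x₀ : ℝ} (hx₀ : 0 < x₀) (hP : H1 P) {c : ℝ} (hc : x₀ ≤ c)
    {γb γ : ℝ → ℝ} (hγb : IsDSSolution s P γb (Ici x₀)) (hγ : SolOn s P γ x₀ c)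
    (hbA : γb x₀ < γ x₀) :
    ∀ x ∈ Icc x₀ c, γb x ≤ γ x := by
  have hγbc : ContinuousOn γb (Icc x₀ c) := fun u hu =>
    ((hγb.2 u hu.1).continuousWithinAt).mono (fun y hy => hy.1)
  by_contra hcon
  push_neg at hcon
  obtain ⟨w, hw, hww⟩ := hcon
  set A := {x ∈ Icc x₀ c | γ x ≤ γb x} with hA
  have hAne : A.Nonempty := ⟨w, hw, hww.le⟩
  have hAbdd : BddBelow A := ⟨x₀, fun y hy => hy.1.1⟩
  have hAclosed : IsClosed A := by
    have heq : A = Icc x₀ c ∩ (fun x => γ x - γb x) ⁻¹' Iic 0 := by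
      ext y
      simp [hA, sub_nonpos]
    rw [heq]
    exact ContinuousOn.preimage_isClosed_of_isClosed
      ((hγ.continuousOn).sub hγbc) isClosed_Icc isClosed_Iic
  set x₁ := sInf A with hx₁def
  have hx₁A : x₁ ∈ A := hAclosed.csInf_mem hAne hAbdd
  have hx₁I : x₁ ∈ Icc x₀ c := hx₁A.1
  have hx₀x₁ : x₀ < x₁ := by
    rcases lt_or_eq_of_le hx₁I.1 with h | h
    · exact h
    · exfalso
      rw [← h] at hx₁A
      exact absurd hx₁A.2 (not_le.mpr hbA)
  have hgt : ∀ x ∈ Ico x₀ x₁, γb x < γ x := by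
    intro x hx
    by_contra hle
    push_neg at hle
    have hxA : x ∈ A := ⟨⟨hx.1, hx.2.le.trans hx₁I.2⟩, hle⟩
    exact absurd (csInf_le hAbdd hxA) (not_le.mpr hx.2)
  have heq1 : γ x₁ = γb x₁ := by
    refine le_antisymm hx₁A.2 ?_
    haveI hne : (𝓝[Ico x₀ x₁] x₁).NeBot := by
      rw [← mem_closure_iff_nhdsWithin_neBot, closure_Ico (ne_of_lt hx₀x₁)]
      exact ⟨hx₁I.1, le_rfl⟩
    have hsub : Ico x₀ x₁ ⊆ Icc x₀ c := fun y hy => ⟨hy.1, hy.2.le.trans hx₁I.2⟩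
    have h₁ : Tendsto (fun x => γ x - γb x) (𝓝[Ico x₀ x₁] x₁) (𝓝 (γ x₁ - γb x₁)) :=
      (((hγ.continuousOn x₁ hx₁I).sub (hγbc x₁ hx₁I)).mono hsub).tendsto
    have h₂ : ∀ᶠ x in 𝓝[Ico x₀ x₁] x₁, 0 ≤ γ x - γb x :=
      eventually_nhdsWithin_of_forall (fun x hx => sub_nonneg.mpr (hgt x hx).le)
    have h₃ := ge_of_tendsto h₁ h₂
    linarith
  -- backward uniqueness on [x₀, x₁] contradicts hbA
  have hsub1 : Icc x₀ x₁ ⊆ Icc x₀ c := Icc_subset_Icc_right hx₁I.2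
  have hne1 : (Icc x₀ x₁).Nonempty := nonempty_Icc.mpr hx₀x₁.le
  obtain ⟨zf, hzf, hminf⟩ := isCompact_Icc.exists_isMinOn hne1 (hγ.continuousOn.mono hsub1)
  obtain ⟨zg, hzg, hming⟩ := isCompact_Icc.exists_isMinOn hne1 (hγbc.mono hsub1)
  set ε := min (γ zf) (γb zg) with hεdef
  have hε0 : 0 < ε := lt_min (hγ.1 zf (hsub1 hzf)) (hγb.1 zg (hsub1 hzg).1)
  have hPc : ContinuousOn P (Icc x₀ x₁) :=
    hP.1.continuousOn.mono (fun u hu => le_trans hx₀.le hu.1)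
  obtain ⟨zP, hzP, hmaxP⟩ := isCompact_Icc.exists_isMaxOn hne1 hPc
  set Pm := P zP with hPmdef
  have hPb : ∀ u ∈ Icc x₀ x₁, 0 ≤ P u ∧ P u ≤ Pm := fun u hu =>
    ⟨(hP.2.2 u (lt_of_lt_of_le hx₀ hu.1)).le, hmaxP hu⟩
  have hv : ∀ t, LipschitzOnWith (Real.toNNReal ((1 + Pm / ε ^ 2) / (s * x₀))) (F s P t)
      (if t ∈ Icc x₀ x₁ then Ici ε else (∅ : Set ℝ)) := by
    intro t
    by_cases h : t ∈ Icc x₀ x₁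
    · rw [if_pos h]
      exact F_lipschitz hs hx₀ hε0 hPb h
    · rw [if_neg h]
      exact lipschitzOnWith_empty _ _
  have hγbIic : ∀ t ∈ Ioc x₀ x₁, HasDerivWithinAt γb (F s P t (γb t)) (Iic t) t := by
    intro t ht
    have h := hγb.2 t (mem_Ici.mpr ht.1.le)
    exact h.mono_of_mem_nhdsWithin
      (mem_nhdsWithin.mpr ⟨Ioi x₀, isOpen_Ioi, ht.1, fun y hy => mem_Ici.mpr (mem_Ioi.mp hy.1).le⟩)
  have hkey : EqOn γ γb (Icc x₀ x₁) :=
    ODE_solution_unique_of_mem_Icc_left (fun t _ => hv t) (hγ.continuousOn.mono hsub1)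
      (fun t ht => deriv_Iic_of_Icc (hγ.2 t (hsub1 ⟨ht.1.le, ht.2⟩)) ht.1 (ht.2.trans hx₁I.2))
      (fun t ht => by
      rw [if_pos (Ioc_subset_Icc_self ht)]
      have h1 : γ zf ≤ γ t := hminf (Ioc_subset_Icc_self ht)
      exact mem_Ici.mpr (le_trans (min_le_left _ _) h1))
      (hγbc.mono hsub1)
      (fun t ht => hγbIic t ht)
      (fun t ht => by
      rw [if_pos (Ioc_subset_Icc_self ht)]
      have h1 : γb zg ≤ γb t := hming (Ioc_subset_Icc_self ht)
      exact mem_Ici.mpr (le_trans (min_le_right _ _) h1))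
      heq1
  have := hkey (left_mem_Icc.mpr hx₀x₁.le)
  rw [this] at hbA
  exact lt_irrefl _ hbA

/-- A priori upper bound via Grönwall. -/
lemma upper (hs : 0 < s) {x₀ : ℝ} (hx₀ : 0 < x₀) {c T m Pm : ℝ} (hcT : c ≤ T)
    {γ : ℝ → ℝ} (hγ : SolOn s P γ x₀ c) (hc : x₀ ≤ c)
    (hm : 0 < m) (hlow : ∀ x ∈ Icc x₀ c, m ≤ γ x)
    (hPb : ∀ u ∈ Icc x₀ T, 0 ≤ P u ∧ P u ≤ Pm) :
    ∀ x ∈ Icc x₀ c, γ x ≤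
      gronwallBound (γ x₀) (1 / (s * x₀)) ((1 / (s * x₀)) * (1 + Pm / m)) (x - x₀) := by
  intro x hx
  have hA : 0 < γ x₀ := hγ.1 x₀ (left_mem_Icc.mpr hc)
  have key := norm_le_gronwallBound_of_norm_deriv_right_le (E := ℝ)
      (f := γ) (f' := fun t => F s P t (γ t)) (δ := γ x₀) (K := 1 / (s * x₀))
      (ε := 1 / (s * x₀) * (1 + Pm / m)) (a := x₀) (b := c)
      hγ.continuousOn
      (fun t ht => deriv_Ici_of_Icc (hγ.2 t (Ico_subset_Icc_self ht)) ht)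
      (by rw [Real.norm_eq_abs, abs_of_pos hA])
      (fun t ht => by
        have ht' : t ∈ Icc x₀ c := Ico_subset_Icc_self ht
        rw [Real.norm_eq_abs, Real.norm_eq_abs, abs_of_pos (hγ.1 t ht')]
        exact F_norm_bound hs hx₀ hm hPb ⟨ht'.1, ht'.2.trans hcT⟩ (hlow t ht'))
      x hx
  rwa [Real.norm_eq_abs, abs_of_pos (hγ.1 x hx)] at key

/-- The Picard–Lindelöf hypotheses (old form). -/
structure IsPicardLindelof (v : ℝ → ℝ → ℝ) (tMin t₀ tMax : ℝ) (x₀ : ℝ) (L : NNReal) (R C : ℝ) :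
    Prop where
  ht₀ : t₀ ∈ Icc tMin tMax
  hR : 0 ≤ R
  lipschitz : ∀ t ∈ Icc tMin tMax, LipschitzOnWith L (v t) (closedBall x₀ R)
  cont : ∀ x ∈ closedBall x₀ R, ContinuousOn (fun t : ℝ => v t x) (Icc tMin tMax)
  norm_le : ∀ t ∈ Icc tMin tMax, ∀ x ∈ closedBall x₀ R, ‖v t x‖ ≤ C
  C_mul_le_R : C * max (tMax - t₀) (t₀ - tMin) ≤ R

/-- Picard–Lindelöf existence, keeping the closed-ball membership. -/
lemma pl_exists {v : ℝ → ℝ → ℝ} {tMin t₀ tMax : ℝ} (y₀ : ℝ) {C R : ℝ} {L : NNReal}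
    (hpl : IsPicardLindelof v tMin t₀ tMax y₀ L R C) :
    ∃ f : ℝ → ℝ, f t₀ = y₀ ∧ ∀ t ∈ Icc tMin tMax, f t ∈ closedBall y₀ R ∧
      HasDerivWithinAt f (v t (f t)) (Icc tMin tMax) t := by
  lift C to NNReal using
    (norm_nonneg _).trans (hpl.norm_le _ hpl.ht₀ _ (mem_closedBall_self hpl.hR))
  lift R to NNReal using hpl.hR
  lift t₀ to Icc tMin tMax using hpl.ht₀
  have hnew : _root_.IsPicardLindelof v t₀ y₀ R 0 C L :=
    { lipschitzOnWith := hpl.lipschitz, continuousOn := hpl.cont, norm_le := hpl.norm_le,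
      mul_max_le := by simpa using hpl.C_mul_le_R }
  obtain ⟨α, hα⟩ := ODE.FunSpace.exists_isFixedPt_next hnew (mem_closedBall_self le_rfl)
  refine ⟨α.compProj, by rw [ODE.FunSpace.compProj_val, ← hα, ODE.FunSpace.next_apply₀],
    fun t ht => ⟨α.compProj_mem_closedBall hnew.mul_max_le, ?_⟩⟩
  apply ODE.hasDerivWithinAt_picard_Icc t₀.2 hnew.continuousOn_uncurry
    α.continuous_compProj.continuousOn (fun _ ht' ↦ α.compProj_mem_closedBall hnew.mul_max_le)
    y₀ ht |>.congr_of_mem _ ht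
  intro t' ht'
  nth_rw 1 [← hα]
  rw [ODE.FunSpace.compProj_of_mem ht', ODE.FunSpace.next_apply]

/-- Existence of a solution with initial value `a > b` on `[x₀, T]`. -/
lemma exists_solOn (hs : 0 < s) {x₀ : ℝ} (hx₀ : 0 < x₀) (hP : H1 P)
    {γb : ℝ → ℝ} (hγb : IsDSSolution s P γb (Ici x₀)) {a : ℝ} (ha : γb x₀ < a)
    {T : ℝ} (hT : x₀ ≤ T) :
    ∃ γ : ℝ → ℝ, SolOn s P γ x₀ T ∧ γ x₀ = a := by
  classical
  have hb0 : 0 < γb x₀ := hγb.1 x₀ self_mem_Ici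
  have ha0 : 0 < a := lt_trans hb0 ha
  have hγbc : ContinuousOn γb (Icc x₀ T) := fun u hu =>
    ((hγb.2 u hu.1).continuousWithinAt).mono (fun y hy => hy.1)
  have hne : (Icc x₀ T).Nonempty := nonempty_Icc.mpr hT
  obtain ⟨zm, hzm, hminb⟩ := isCompact_Icc.exists_isMinOn hne hγbc
  have hm0 : 0 < γb zm := hγb.1 zm hzm.1
  set m := γb zm with hmdef
  have hmb : m ≤ γb x₀ := hminb (left_mem_Icc.mpr hT)
  have hma : m < a := lt_of_le_of_lt hmb ha
  have hPc : ContinuousOn P (Icc x₀ T) :=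
    hP.1.continuousOn.mono (fun u hu => le_trans hx₀.le hu.1)
  obtain ⟨zP, hzP, hmaxP⟩ := isCompact_Icc.exists_isMaxOn hne hPc
  set Pm := P zP with hPmdef
  have hPb : ∀ u ∈ Icc x₀ T, 0 ≤ P u ∧ P u ≤ Pm := fun u hu =>
    ⟨(hP.2.2 u (lt_of_lt_of_le hx₀ hu.1)).le, hmaxP hu⟩
  have hPm0 : 0 ≤ Pm := le_trans (hPb x₀ (left_mem_Icc.mpr hT)).1
    (hPb x₀ (left_mem_Icc.mpr hT)).2
  have hK₀0 : 0 < 1 / (s * x₀) := by positivity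
  have hε₀0 : 0 < 1 / (s * x₀) * (1 + Pm / m) := by positivity
  set M := gronwallBound a (1 / (s * x₀)) (1 / (s * x₀) * (1 + Pm / m)) (T - x₀) with hMdef
  have haM : a ≤ M := by
    have h1 := gronwallBound_mono (δ := a) ha0.le hK₀0 hε₀0.le (sub_nonneg.mpr hT)
    rwa [gronwallBound_x0] at h1
  have hM0 : 0 < M := lt_of_lt_of_le ha0 haM
  set R := min (m / 2) 1 with hRdef
  have hR0 : 0 < R := lt_min (half_pos hm0) zero_lt_one
  have hRm : R ≤ m / 2 := min_le_left _ _
  have hR1 : R ≤ 1 := min_le_right _ _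
  set C := 1 / (s * x₀) * (M + 1) + 1 / (s * x₀) * (1 + Pm / (m / 2)) with hCdef
  have hC0 : 0 < C := by positivity
  set δ := R / C with hδdef
  have hδ0 : 0 < δ := div_pos hR0 hC0
  -- the "upgrade" step: weak positivity to strong a priori bounds
  have upgrade : ∀ c : ℝ, x₀ ≤ c → c ≤ T → ∀ γ : ℝ → ℝ, γ x₀ = a →
      (∀ x ∈ Icc x₀ c, 0 < γ x) →
      (∀ x ∈ Icc x₀ c, HasDerivWithinAt γ (F s P x (γ x)) (Icc x₀ c) x) →
      (∀ x ∈ Icc x₀ c, m ≤ γ x ∧ γ x ≤ M) := by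
    intro c hc1 hc2 γ hγa hpos hder
    have hsol : SolOn s P γ x₀ c := ⟨hpos, hder⟩
    have hcomp := compare hs hx₀ hP hc1 hγb hsol (by rw [hγa]; exact ha)
    have hlow : ∀ x ∈ Icc x₀ c, m ≤ γ x := by
      intro x hx
      exact le_trans (hminb ⟨hx.1, hx.2.trans hc2⟩) (hcomp x hx)
    have hup := upper hs hx₀ hc2 hsol hc1 hm0 hlow hPb
    intro x hx
    refine ⟨hlow x hx, le_trans (hup x hx) ?_⟩
    rw [hγa]
    exact gronwallBound_mono ha0.le hK₀0 hε₀0.le (by linarith [hx.2])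
  -- main induction
  have key : ∀ n : ℕ, ∃ γ : ℝ → ℝ, γ x₀ = a ∧
      (∀ x ∈ Icc x₀ (min (x₀ + n * δ) T), m ≤ γ x ∧ γ x ≤ M) ∧
      (∀ x ∈ Icc x₀ (min (x₀ + n * δ) T),
        HasDerivWithinAt γ (F s P x (γ x)) (Icc x₀ (min (x₀ + n * δ) T)) x) := by
    intro n
    induction n with
    | zero =>
      have h0 : min (x₀ + (0 : ℕ) * δ) T = x₀ := by
        rw [Nat.cast_zero, zero_mul, add_zero]
        exact min_eq_left hT
      rw [h0]
      refine ⟨fun _ => a, rfl, ?_, ?_⟩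
      · intro x hx
        rw [Icc_self, mem_singleton_iff] at hx
        exact ⟨hma.le, haM⟩
      · intro x hx
        rw [Icc_self, mem_singleton_iff] at hx
        subst hx
        rw [Icc_self]
        exact hasDerivWithinAt_singleton _ _ _
    | succ n ih =>
      obtain ⟨γ, hγa, hbnd, hder⟩ := ih
      set τ := min (x₀ + n * δ) T with hτdef
      have hτ1 : x₀ ≤ τ := by
        refine le_min ?_ hT
        have := mul_nonneg (Nat.cast_nonneg n : (0:ℝ) ≤ n) hδ0.le
        linarith
      have hτT : τ ≤ T := min_le_right _ _
      by_cases hcase : T ≤ x₀ + n * δ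
      · have e1 : τ = T := min_eq_right hcase
        have e2 : min (x₀ + (n + 1 : ℕ) * δ) T = τ := by
          rw [e1]
          refine min_eq_right ?_
          push_cast
          nlinarith [hδ0]
        rw [e2]
        exact ⟨γ, hγa, hbnd, hder⟩
      · push_neg at hcase
        have eτ : τ = x₀ + n * δ := min_eq_left hcase.le
        have hτT' : τ < T := by rw [eτ]; exact hcase
        set τ' := min (τ + δ) T with hτ'def
        have hττ' : τ ≤ τ' := le_min (by linarith) hτT'.le
        have hτ'T : τ' ≤ T := min_le_right _ _
        have hx₀τ' : x₀ ≤ τ' := le_trans hτ1 hττ'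
        have hτ'δ : τ' - τ ≤ δ := by
          have := min_le_left (τ + δ) T
          linarith
        have emin : min (x₀ + (n + 1 : ℕ) * δ) T = τ' := by
          rw [hτ'def, eτ]
          push_cast
          ring_nf
        rw [emin]
        have hyτ := hbnd τ (right_mem_Icc.mpr hτ1)
        have hyτ0 : 0 < γ τ := lt_of_lt_of_le hm0 hyτ.1
        have hball : Metric.closedBall (γ τ) R ⊆ Ici (m / 2) := by
          intro y hy
          rw [Real.closedBall_eq_Icc] at hy
          have : m - m / 2 ≤ γ τ - R := by linarith [hyτ.1]
          simp only [mem_Ici]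
          linarith [hy.1]
        have hsubT : Icc τ τ' ⊆ Icc x₀ T := fun y hy =>
          ⟨le_trans hτ1 hy.1, le_trans hy.2 hτ'T⟩
        have hpl : IsPicardLindelof (F s P) τ τ τ' (γ τ)
            (Real.toNNReal ((1 + Pm / (m / 2) ^ 2) / (s * x₀))) R C := by
          constructor
          · exact left_mem_Icc.mpr hττ'
          · exact hR0.le
          · intro t ht
            exact (F_lipschitz hs hx₀ (half_pos hm0) hPb (hsubT ht)).mono hball
          · intro y hy
            have hy' : m / 2 ≤ y := hball hy
            exact (F_contOn_t hPc hx₀ hs.ne' (ne_of_gt (lt_of_lt_of_le (half_pos hm0) hy'))).mono hsubT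
          · intro t ht y hy
            have hy1 : m / 2 ≤ y := hball hy
            have hy2 : y ≤ M + 1 := by
              rw [Real.closedBall_eq_Icc] at hy
              linarith [hy.2, hyτ.2]
            rw [Real.norm_eq_abs]
            calc |F s P t y| ≤ 1 / (s * x₀) * y + 1 / (s * x₀) * (1 + Pm / (m / 2)) :=
                  F_norm_bound hs hx₀ (half_pos hm0) hPb (hsubT ht) hy1
              _ ≤ C := by
                  rw [hCdef]
                  have : 1 / (s * x₀) * y ≤ 1 / (s * x₀) * (M + 1) :=
                    mul_le_mul_of_nonneg_left hy2 hK₀0.le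
                  linarith
          · have hmax : max (τ' - τ) (τ - τ) = τ' - τ := by
              rw [sub_self]
              exact max_eq_left (by linarith)
            rw [hmax]
            calc C * (τ' - τ) ≤ C * δ := mul_le_mul_of_nonneg_left hτ'δ hC0.le
              _ = R := by rw [hδdef]; field_simp
        obtain ⟨f, hfτ, hf⟩ := pl_exists (γ τ) hpl
        have hfb : ∀ t ∈ Icc τ τ', m / 2 ≤ f t ∧ f t ≤ M + 1 := by
          intro t ht
          have h1 := (hf t ht).1
          rw [Real.closedBall_eq_Icc] at h1
          constructor
          · linarith [h1.1, hyτ.1]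
          · linarith [h1.2, hyτ.2]
        set γ' : ℝ → ℝ := fun x => if x ≤ τ then γ x else f x with hγ'def
        have hγ'eqγ : ∀ x ∈ Icc x₀ τ, γ' x = γ x := fun x hx => if_pos hx.2
        have hγ'eqf : ∀ x ∈ Icc τ τ', γ' x = f x := by
          intro x hx
          by_cases h : x ≤ τ
          · have hxτ : x = τ := le_antisymm h hx.1
            rw [hγ'def]
            simp only [if_pos h]
            rw [hxτ, hfτ]
          · simp only [hγ'def, if_neg h]
        have hicc : Icc x₀ τ' = Icc x₀ τ ∪ Icc τ τ' := (Icc_union_Icc_eq_Icc hτ1 hττ').symm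
        have hγ'a : γ' x₀ = a := by
          rw [hγ'def]
          simp only [if_pos hτ1]
          exact hγa
        have hder' : ∀ x ∈ Icc x₀ τ', HasDerivWithinAt γ' (F s P x (γ' x)) (Icc x₀ τ') x := by
          intro x hx
          rcases lt_trichotomy x τ with h | h | h
          · have hx' : x ∈ Icc x₀ τ := ⟨hx.1, h.le⟩
            have h1 : HasDerivWithinAt γ (F s P x (γ x)) (Icc x₀ τ') x :=
              (hder x hx').mono_of_mem_nhdsWithin
                (mem_nhdsWithin.mpr ⟨Iio τ, isOpen_Iio, h, fun y hy => ⟨hy.2.1, hy.1.le⟩⟩)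
            have e : γ' x = γ x := if_pos h.le
            rw [e]
            refine h1.congr_of_eventuallyEq ?_ e
            exact Filter.eventuallyEq_of_mem
              (mem_nhdsWithin_of_mem_nhds (Iic_mem_nhds h)) (fun y hy => if_pos hy)
          · have e : γ' x = γ x := if_pos h.le
            have hxmem : x ∈ Icc τ τ' := by rw [h]; exact left_mem_Icc.mpr hττ'
            have e2 : γ' x = f x := hγ'eqf x hxmem
            have hL : HasDerivWithinAt γ' (F s P x (γ' x)) (Icc x₀ τ) x := by
              rw [e]
              exact (hder x ⟨hx.1, h.le⟩).congr hγ'eqγ e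
            have hRt : HasDerivWithinAt γ' (F s P x (γ' x)) (Icc τ τ') x := by
              rw [e2]
              exact ((hf x hxmem).2).congr hγ'eqf e2
            rw [hicc]
            exact hL.union hRt
          · have hx2 : x ∈ Icc τ τ' := ⟨h.le, hx.2⟩
            have h1 : HasDerivWithinAt f (F s P x (f x)) (Icc x₀ τ') x :=
              ((hf x hx2).2).mono_of_mem_nhdsWithin
                (mem_nhdsWithin.mpr ⟨Ioi τ, isOpen_Ioi, h, fun y hy => ⟨hy.1.le, hy.2.2⟩⟩)
            have e : γ' x = f x := by simp only [hγ'def, if_neg (not_le.mpr h)]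
            rw [e]
            refine h1.congr_of_eventuallyEq ?_ e
            exact Filter.eventuallyEq_of_mem
              (mem_nhdsWithin_of_mem_nhds (Ioi_mem_nhds h))
              (fun y hy => by simp only [hγ'def, if_neg (not_le.mpr (mem_Ioi.mp hy))])
        have hpos' : ∀ x ∈ Icc x₀ τ', 0 < γ' x := by
          intro x hx
          by_cases h : x ≤ τ
          · have e : γ' x = γ x := if_pos h
            rw [e]
            exact lt_of_lt_of_le hm0 (hbnd x ⟨hx.1, h⟩).1
          · have e : γ' x = f x := if_neg h
            rw [e]
            have := (hfb x ⟨(not_le.mp h).le, hx.2⟩).1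
            linarith [half_pos hm0]
        exact ⟨γ', hγ'a, upgrade τ' hx₀τ' hτ'T γ' hγ'a hpos' hder', hder'⟩
  obtain ⟨n, hn⟩ := exists_nat_ge ((T - x₀) / δ)
  obtain ⟨γ, hγa, hbnd, hder⟩ := key n
  have hminT : min (x₀ + n * δ) T = T := by
    refine min_eq_right ?_
    rw [div_le_iff₀ hδ0] at hn
    linarith
  rw [hminT] at hbnd hder
  exact ⟨γ, ⟨fun x hx => lt_of_lt_of_le hm0 (hbnd x hx).1, hder⟩, hγa⟩

end DSaux

theorem stmt_12 (s : ℝ) (hs : 0 < s) (P : ℝ → ℝ) (hP : H1 P)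
    (x₀ : ℝ) (hx₀ : 0 < x₀) (b : ℝ) (hb : 0 < b)
    (hex : ∃ γ : ℝ → ℝ, IsDSSolution s P γ (Set.Ici x₀) ∧ γ x₀ = b) :
    ∀ a ≥ b, ∃ γ : ℝ → ℝ, IsDSSolution s P γ (Set.Ici x₀) ∧ γ x₀ = a := by
  obtain ⟨γ₀, hγ₀, hγ₀b⟩ := hex
  intro a ha
  rcases eq_or_lt_of_le ha with h | h
  · exact ⟨γ₀, hγ₀, by rw [hγ₀b, ← h]⟩
  have ha' : γ₀ x₀ < a := by rw [hγ₀b]; exact h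
  have hex2 : ∀ n : ℕ, ∃ γ : ℝ → ℝ, DSaux.SolOn s P γ x₀ (x₀ + n + 1) ∧ γ x₀ = a := by
    intro n
    refine DSaux.exists_solOn hs hx₀ hP hγ₀ ha' ?_
    have : (0:ℝ) ≤ n := Nat.cast_nonneg n
    linarith
  choose Γ hΓ hΓa using hex2
  have huniq : ∀ (k n : ℕ), k ≤ n → ∀ x ∈ Icc x₀ (x₀ + k + 1), Γ k x = Γ n x := by
    intro k n hkn x hx
    have hcast : (k : ℝ) ≤ n := Nat.cast_le.mpr hkn
    have hk0 : (0:ℝ) ≤ k := Nat.cast_nonneg k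
    exact DSaux.sol_unique hs hx₀ hP (by linarith)
      (hΓ k) ((hΓ n).mono (by linarith)) (by rw [hΓa k, hΓa n]) hx
  have hmem : ∀ x ∈ Ici x₀, x ∈ Icc x₀ (x₀ + (Nat.ceil (x - x₀) : ℝ) + 1) := by
    intro x hx
    have := Nat.le_ceil (x - x₀)
    exact ⟨hx, by linarith⟩
  set γ : ℝ → ℝ := fun x => Γ (Nat.ceil (x - x₀)) x with hγdef
  have huse : ∀ x ∈ Ici x₀, ∀ n : ℕ, Nat.ceil (x - x₀) ≤ n → γ x = Γ n x := by
    intro x hx n hn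
    exact huniq _ n hn x (hmem x hx)
  have hγa : γ x₀ = a := by
    show Γ (Nat.ceil (x₀ - x₀)) x₀ = a
    rw [sub_self, Nat.ceil_zero]
    exact hΓa 0
  refine ⟨γ, ⟨?_, ?_⟩, hγa⟩
  · intro x hx
    have e : γ x = Γ (Nat.ceil (x - x₀)) x := rfl
    rw [e]
    exact (hΓ _).1 x (hmem x hx)
  · intro x hx
    set N := Nat.ceil (x + 1 - x₀) with hNdef
    have hxN : x + 1 - x₀ ≤ N := Nat.le_ceil _
    have hxmem : x ∈ Icc x₀ (x₀ + (N : ℝ) + 1) := ⟨hx, by linarith⟩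
    have hder := (hΓ N).2 x hxmem
    have h1 : HasDerivWithinAt (Γ N) (DSaux.F s P x (Γ N x)) (Ici x₀) x :=
      hder.mono_of_mem_nhdsWithin
        (mem_nhdsWithin.mpr ⟨Iio (x₀ + (N : ℝ) + 1), isOpen_Iio,
          by simp only [mem_Iio]; linarith, fun y hy => ⟨hy.2, hy.1.le⟩⟩)
    have hev : γ =ᶠ[𝓝[Ici x₀] x] Γ N := by
      refine Filter.eventuallyEq_of_mem
        (inter_mem (mem_nhdsWithin_of_mem_nhds (Iio_mem_nhds (lt_add_one x)))
          self_mem_nhdsWithin) ?_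
      rintro y ⟨hy1, hy2⟩
      exact huse y hy2 N (Nat.ceil_mono (by linarith [mem_Iio.mp hy1]))
    have e : γ x = Γ N x := huse x hx N (Nat.ceil_mono (by linarith))
    have h2 : HasDerivWithinAt γ (DSaux.F s P x (Γ N x)) (Ici x₀) x :=
      h1.congr_of_eventuallyEq hev e
    rw [show (γ x + γ x ^ 2 - P x) / (s * x * γ x) = DSaux.F s P x (Γ N x) by rw [e]; rfl]
    exact h2
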